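/- If 0 < q ≤ (1 - 2^{1/3} + 4^{1/3})/3 and f is a solution of Schilling's problem which is bounded in a neighbourhood of at least one point of the set {ε·∑_{i=1}^{n} qⁱ : n ∈ ℕ ∪ {0, +∞}, ε ∈ {-1,1}} (where the n = +∞ point is ε·q/(1-q)), then f is identically zero. -/

import Mathlib

lemma schilling_mant (q : ℝ) (hq : 0 < q) (hq2 : q < 1) (t : ℝ) (ht0 : 0 < t) (ht1 : t ≤ 1) :
    ∃ k : ℕ, q ^ (k+1) < t ∧ t ≤ q ^ k := by
  obtain ⟨n, hn⟩ := exists_pow_lt_of_lt_one ht0 hq2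
  have h0 : ¬ (q ^ 0 < t) := by simpa using ht1
  have hS : ∃ m, q ^ m < t := ⟨n, hn⟩
  classical
  have hk0 : q ^ (Nat.find hS) < t := Nat.find_spec hS
  have hk0ne : Nat.find hS ≠ 0 := by
    intro h
    exact h0 (h ▸ hk0)
  obtain ⟨k, hk⟩ := Nat.exists_eq_succ_of_ne_zero hk0ne
  refine ⟨k, ?_, ?_⟩
  · rw [← Nat.succ_eq_add_one, ← hk]; exact hk0
  · have := Nat.find_min hS (m := k) (by omega)
    push_neg at this
    exact this

set_option maxHeartbeats 4000000 in

theorem schilling_main (q : ℝ) (hq : 0 < q)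
    (hq1 : q ≤ (1 - (2 : ℝ) ^ ((1 : ℝ) / 3) + (4 : ℝ) ^ ((1 : ℝ) / 3)) / 3)
    (f : ℝ → ℝ)
    (heq : ∀ x : ℝ, f (q * x) = 1 / (4 * q) * (f (x - 1) + f (x + 1) + 2 * f x))
    (hQ : ∀ x : ℝ, |x| > q / (1 - q) → f x = 0)
    (hbdd : ∃ p : ℝ, (∃ ε : ℝ, (ε = -1 ∨ ε = 1) ∧
        ((∃ n : ℕ, p = ε * ∑ i ∈ Finset.Icc 1 n, q ^ i) ∨ p = ε * (q / (1 - q)))) ∧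
      ∃ δ > 0, ∃ M : ℝ, ∀ x : ℝ, |x - p| < δ → |f x| ≤ M) :
    ∀ x : ℝ, f x = 0 := by
  -- numeric bound
  have hqb : q ≤ 3319/7500 := by
    set c : ℝ := (2 : ℝ) ^ ((1 : ℝ) / 3) with hcdef
    have hcpos : 0 < c := Real.rpow_pos_of_pos (by norm_num) _
    have hc3 : c ^ 3 = 2 := by
      rw [hcdef, ← Real.rpow_natCast ((2:ℝ) ^ ((1:ℝ)/3)) 3, ← Real.rpow_mul (by norm_num)]
      norm_num
    have h4 : (4 : ℝ) ^ ((1 : ℝ) / 3) = c ^ 2 := by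
      rw [hcdef, ← Real.rpow_natCast ((2:ℝ) ^ ((1:ℝ)/3)) 2, ← Real.rpow_mul (by norm_num)]
      rw [show (4:ℝ) = (2:ℝ)^(2:ℕ) by norm_num, ← Real.rpow_natCast (2:ℝ) 2,
        ← Real.rpow_mul (by norm_num)]
      norm_num
    have hc1 : 1 < c := by nlinarith [hc3, hcpos]
    have hcb : c < 63 / 50 := by
      by_contra h
      push_neg at h
      have := pow_le_pow_left₀ (by norm_num : (0:ℝ) ≤ 63/50) h 3
      rw [hc3] at this
      norm_num at this
    have key : c ^ 2 - c < 819 / 2500 := by nlinarith [hcb, hc1]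
    rw [h4] at hq1
    nlinarith [hq1, key]
  have hq2 : q < 1/2 := by nlinarith
  have hq1' : q < 1 := by linarith
  have h1q : (0:ℝ) < 1 - q := by linarith
  have hqcube : q^3 + 2*q - 1 < 0 := by
    have h3 : q^3 ≤ (3319/7500)^3 := pow_le_pow_left₀ hq.le hqb 3
    nlinarith [h3]
  -- Q and its identities
  set Q : ℝ := q / (1 - q) with hQdef
  have hQpos : 0 < Q := div_pos hq h1q
  have hQ1 : Q < 1 := by
    rw [hQdef, div_lt_one h1q]; linarith
  have hQq : q * Q + q = Q := by
    rw [hQdef]; field_simp; ring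
  have hzero : ∀ x : ℝ, Q < |x| → f x = 0 := fun x hx => hQ x hx
  have h4q : (0:ℝ) < 4 * q := by linarith
  have heq4 : ∀ x : ℝ, 4 * q * f (q * x) = f (x - 1) + f (x + 1) + 2 * f x := by
    intro x
    have h := heq x
    rw [h]
    field_simp
  -- general descent relations
  have hrelR : ∀ s : ℝ, Q - 1 < s → f s = 4 * q * f (q * s + q) := by
    intro s hs
    have h := heq4 (s + 1)
    have e1 : f (s + 1 - 1) = f s := by ring_nf
    have e2 : f (s + 1 + 1) = 0 := by
      apply hzero
      rw [abs_of_pos (by linarith [hQpos] : (0:ℝ) < s + 1 + 1)]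
      linarith
    have e3 : f (s + 1) = 0 := by
      apply hzero
      rw [abs_of_pos (by linarith [hQpos] : (0:ℝ) < s + 1)]
      linarith
    have e4 : q * (s + 1) = q * s + q := by ring
    rw [e4] at h
    rw [e1, e2, e3] at h
    linarith
  have hrelL : ∀ s : ℝ, s < 1 - Q → f s = 4 * q * f (q * s - q) := by
    intro s hs
    have h := heq4 (s - 1)
    have e1 : f (s - 1 + 1) = f s := by ring_nf
    have e2 : f (s - 1 - 1) = 0 := by
      apply hzero
      rw [abs_of_neg (by linarith [hQpos] : s - 1 - 1 < 0)]
      linarith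
    have e3 : f (s - 1) = 0 := by
      apply hzero
      rw [abs_of_neg (by linarith [hQpos] : s - 1 < 0)]
      linarith
    have e4 : q * (s - 1) = q * s - q := by ring
    rw [e4] at h
    rw [e1, e2, e3] at h
    linarith
  -- partial sums
  have hpQ : ∀ n : ℕ, Q - (∑ i ∈ Finset.Icc 1 n, q ^ i) = q ^ n * Q := by
    intro n
    induction n with
    | zero => simp
    | succ m ih =>
      rw [Finset.sum_Icc_succ_top (by omega : 1 ≤ m + 1)]
      have : q ^ (m+1) * Q = q^m * (q * Q) := by ring
      rw [this, show q * Q = Q - q by linarith [hQq]]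
      have : q ^ (m+1) = q ^ m * q := by ring
      rw [this]
      linarith [ih]
  have hppos : ∀ n : ℕ, 0 ≤ ∑ i ∈ Finset.Icc 1 n, q ^ i := by
    intro n
    apply Finset.sum_nonneg
    intro i _
    positivity
  -- descent of boundedness to 0 : right side
  have descendR : ∀ n : ℕ,
      (∃ δ > 0, ∃ M : ℝ, ∀ x : ℝ, |x - (∑ i ∈ Finset.Icc 1 n, q ^ i)| < δ → |f x| ≤ M) →
      (∃ δ > 0, ∃ M : ℝ, ∀ x : ℝ, |x| < δ → |f x| ≤ M) := by
    intro n
    induction n with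
    | zero =>
      intro h
      simpa using h
    | succ m ih =>
      rintro ⟨δ, hδ, M, hM⟩
      apply ih
      refine ⟨min (δ/q) (1 - Q), lt_min (by positivity) (by linarith), 4*q*M, ?_⟩
      intro x hx
      have hx1 : |x - (∑ i ∈ Finset.Icc 1 m, q ^ i)| < δ/q := lt_of_lt_of_le hx (min_le_left _ _)
      have hx2 : |x - (∑ i ∈ Finset.Icc 1 m, q ^ i)| < 1 - Q := lt_of_lt_of_le hx (min_le_right _ _)
      have hxQ : Q - 1 < x := by
        have := abs_lt.1 hx2
        have hp := hppos m
        linarith [this.1]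
      rw [hrelR x hxQ, abs_mul, abs_of_pos h4q]
      have harg : |q * x + q - (∑ i ∈ Finset.Icc 1 (m+1), q ^ i)| < δ := by
        have hsum : (∑ i ∈ Finset.Icc 1 (m+1), q ^ i) = q * (∑ i ∈ Finset.Icc 1 m, q ^ i) + q := by
          have h1 := hpQ m
          have h2 := hpQ (m+1)
          linear_combination (-1)*h2 + q*h1 + (-1)*hQq
        rw [hsum, show q*x + q - (q * (∑ i ∈ Finset.Icc 1 m, q ^ i) + q)
            = q * (x - ∑ i ∈ Finset.Icc 1 m, q ^ i) by ring, abs_mul, abs_of_pos hq]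
        calc q * |x - ∑ i ∈ Finset.Icc 1 m, q ^ i| < q * (δ/q) := by
              apply mul_lt_mul_of_pos_left hx1 hq
          _ = δ := by field_simp
      exact mul_le_mul_of_nonneg_left (hM _ harg) (by linarith)
  have descendL : ∀ n : ℕ,
      (∃ δ > 0, ∃ M : ℝ, ∀ x : ℝ, |x + (∑ i ∈ Finset.Icc 1 n, q ^ i)| < δ → |f x| ≤ M) →
      (∃ δ > 0, ∃ M : ℝ, ∀ x : ℝ, |x| < δ → |f x| ≤ M) := by
    intro n
    induction n with
    | zero =>
      intro h
      simpa using h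
    | succ m ih =>
      rintro ⟨δ, hδ, M, hM⟩
      apply ih
      refine ⟨min (δ/q) (1 - Q), lt_min (by positivity) (by linarith), 4*q*M, ?_⟩
      intro x hx
      have hx1 : |x + (∑ i ∈ Finset.Icc 1 m, q ^ i)| < δ/q := lt_of_lt_of_le hx (min_le_left _ _)
      have hx2 : |x + (∑ i ∈ Finset.Icc 1 m, q ^ i)| < 1 - Q := lt_of_lt_of_le hx (min_le_right _ _)
      have hxQ : x < 1 - Q := by
        have := abs_lt.1 hx2
        have hp := hppos m
        linarith [this.2]
      rw [hrelL x hxQ, abs_mul, abs_of_pos h4q]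
      have harg : |q * x - q + (∑ i ∈ Finset.Icc 1 (m+1), q ^ i)| < δ := by
        have hsum : (∑ i ∈ Finset.Icc 1 (m+1), q ^ i) = q * (∑ i ∈ Finset.Icc 1 m, q ^ i) + q := by
          have h1 := hpQ m
          have h2 := hpQ (m+1)
          linear_combination (-1)*h2 + q*h1 + (-1)*hQq
        rw [hsum, show q*x - q + (q * (∑ i ∈ Finset.Icc 1 m, q ^ i) + q)
            = q * (x + ∑ i ∈ Finset.Icc 1 m, q ^ i) by ring, abs_mul, abs_of_pos hq]
        calc q * |x + ∑ i ∈ Finset.Icc 1 m, q ^ i| < q * (δ/q) := by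
              apply mul_lt_mul_of_pos_left hx1 hq
          _ = δ := by field_simp
      exact mul_le_mul_of_nonneg_left (hM _ harg) (by linarith)
  -- boundedness near 0
  have hbdd0 : ∃ δ > 0, ∃ M : ℝ, ∀ x : ℝ, |x| < δ → |f x| ≤ M := by
    obtain ⟨p, ⟨ε, hε, hpc⟩, δ, hδ, M, hM⟩ := hbdd
    have hQcase : (p = Q ∨ p = -Q) → ∃ δ > 0, ∃ M : ℝ, ∀ x : ℝ, |x| < δ → |f x| ≤ M := by
      rintro (hp | hp)
      · obtain ⟨n, hn⟩ := exists_pow_lt_of_lt_one (show (0:ℝ) < δ/(2*Q) by positivity) hq1'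
        apply descendR n
        refine ⟨δ/2, by positivity, M, ?_⟩
        intro x hx
        apply hM
        have h1 := hpQ n
        have h2 : q ^ n * Q < δ/2 := by
          rw [show δ/2 = (δ/(2*Q))*Q by field_simp]
          exact mul_lt_mul_of_pos_right hn hQpos
        have h3 : 0 < q ^ n * Q := by positivity
        rw [hp]
        have htri := abs_sub_le x (∑ i ∈ Finset.Icc 1 n, q ^ i) Q
        have habs : |(∑ i ∈ Finset.Icc 1 n, q ^ i) - Q| = q^n * Q := by
          rw [abs_of_nonpos (by linarith), neg_sub]
          linarith
        rw [habs] at htri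
        linarith [htri, hx, h2]
      · obtain ⟨n, hn⟩ := exists_pow_lt_of_lt_one (show (0:ℝ) < δ/(2*Q) by positivity) hq1'
        apply descendL n
        refine ⟨δ/2, by positivity, M, ?_⟩
        intro x hx
        apply hM
        have h1 := hpQ n
        have h2 : q ^ n * Q < δ/2 := by
          rw [show δ/2 = (δ/(2*Q))*Q by field_simp]
          exact mul_lt_mul_of_pos_right hn hQpos
        have h3 : 0 < q ^ n * Q := by positivity
        rw [hp]
        have htri := abs_sub_le x (-(∑ i ∈ Finset.Icc 1 n, q ^ i)) (-Q)
        have habs : |(-(∑ i ∈ Finset.Icc 1 n, q ^ i)) - (-Q)| = q^n * Q := by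
          rw [show (-(∑ i ∈ Finset.Icc 1 n, q ^ i)) - (-Q) = Q - (∑ i ∈ Finset.Icc 1 n, q ^ i) by ring,
            abs_of_nonneg (by linarith)]
          linarith
        have hxx : |x - (-(∑ i ∈ Finset.Icc 1 n, q ^ i))| < δ/2 := by
          rw [show x - (-(∑ i ∈ Finset.Icc 1 n, q ^ i)) = x + (∑ i ∈ Finset.Icc 1 n, q ^ i) by ring]
          exact hx
        rw [habs] at htri
        linarith [htri, hxx, h2]
    rcases hpc with ⟨n, hn⟩ | hn
    · rcases hε with h | h
      · apply descendL n
        refine ⟨δ, hδ, M, ?_⟩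
        intro x hx
        apply hM
        rw [hn, h]
        rw [show x - -1 * (∑ i ∈ Finset.Icc 1 n, q ^ i) = x + (∑ i ∈ Finset.Icc 1 n, q ^ i) by ring]
        exact hx
      · apply descendR n
        refine ⟨δ, hδ, M, ?_⟩
        intro x hx
        apply hM
        rw [hn, h]
        rw [show x - 1 * (∑ i ∈ Finset.Icc 1 n, q ^ i) = x - (∑ i ∈ Finset.Icc 1 n, q ^ i) by ring]
        exact hx
    · rcases hε with h | h
      · apply hQcase
        right
        rw [hn, h, hQdef]; ring
      · apply hQcase
        left
        rw [hn, h, hQdef]; ring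
  -- f vanishes near 0
  have hsmall : ∀ x : ℝ, |x| < 1 - Q → f x = 0 := by
    intro x hx
    have hstep : ∀ y : ℝ, |y| < 1 - Q → f y = 2 * q * f (q * y) := by
      intro y hy
      obtain ⟨hy1, hy2⟩ := abs_lt.1 hy
      have h := heq4 y
      have e2 : f (y - 1) = 0 := by
        apply hzero
        rw [abs_of_neg (by linarith : y - 1 < 0)]
        linarith
      have e3 : f (y + 1) = 0 := by
        apply hzero
        rw [abs_of_pos (by linarith [hQpos] : (0:ℝ) < y + 1)]
        linarith
      rw [e2, e3] at h
      linarith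
    have hiter : ∀ n : ℕ, f x = (2*q)^n * f (q^n * x) := by
      intro n
      induction n with
      | zero => simp
      | succ m ih =>
        have habs : |q^m * x| < 1 - Q := by
          rw [abs_mul, abs_of_pos (by positivity : (0:ℝ) < q^m)]
          calc q^m * |x| ≤ 1 * |x| := by
                apply mul_le_mul_of_nonneg_right _ (abs_nonneg x)
                exact pow_le_one₀ hq.le hq1'.le
            _ < 1 - Q := by rw [one_mul]; exact hx
        rw [ih, hstep _ habs]
        rw [show q * (q^m * x) = q^(m+1) * x by ring]
        ring
    obtain ⟨δ, hδ, M, hM⟩ := hbdd0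
    have hM0 : 0 ≤ M := le_trans (abs_nonneg _) (hM 0 (by simpa using hδ))
    have hkey : ∀ ε : ℝ, 0 < ε → |f x| ≤ ε := by
      intro ε hε
      obtain ⟨n1, hn1⟩ := exists_pow_lt_of_lt_one (show (0:ℝ) < δ/(1 + |x|) by positivity) hq1'
      obtain ⟨n2, hn2⟩ := exists_pow_lt_of_lt_one (show (0:ℝ) < ε/(1 + M) by positivity)
        (show 2*q < 1 by linarith)
      set n := max n1 n2
      have hq_n1 : q^n ≤ q^n1 := pow_le_pow_of_le_one hq.le hq1'.le (le_max_left _ _)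
      have hq_n2 : (2*q)^n ≤ (2*q)^n2 :=
        pow_le_pow_of_le_one (by linarith) (by linarith) (le_max_right _ _)
      have harg : |q^n * x| < δ := by
        rw [abs_mul, abs_of_pos (by positivity : (0:ℝ) < q^n)]
        have h1 : q^n * |x| ≤ q^n1 * |x| := mul_le_mul_of_nonneg_right hq_n1 (abs_nonneg x)
        have h2 : q^n1 * |x| < (δ/(1 + |x|)) * (1 + |x|) := by
          apply mul_lt_mul' hn1.le _ (abs_nonneg x) (by positivity)
          linarith [abs_nonneg x]
        rw [div_mul_cancel₀ _ (by positivity : (1:ℝ) + |x| ≠ 0)] at h2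
        linarith
      have hfn : |f (q^n * x)| ≤ M := hM _ harg
      have := hiter n
      rw [this, abs_mul, abs_of_pos (by positivity : (0:ℝ) < (2*q)^n)]
      have hfin : (2*q)^n * |f (q^n * x)| < ε := by
        calc (2*q)^n * |f (q^n * x)| ≤ (2*q)^n2 * M := by
              apply mul_le_mul hq_n2 hfn (abs_nonneg _) (by positivity)
          _ < (ε/(1+M)) * (1+M) := by
              apply mul_lt_mul' hn2.le _ hM0 (by positivity)
              linarith
          _ = ε := by field_simp
      exact hfin.le
    by_contra hne
    have h0 : 0 < |f x| := abs_pos.2 hne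
    have := hkey (|f x|/2) (by linarith)
    linarith
  -- endpoint zeros
  have hQ0 : f Q = 0 := by
    rcases lt_or_ge q (1/3) with h3 | h3
    · apply hsmall
      rw [abs_of_pos hQpos]
      rw [hQdef]
      rw [div_lt_iff₀ h1q]
      nlinarith
    · have h := hrelR Q (by linarith)
      rw [show q * Q + q = Q from hQq] at h
      have : (1 - 4*q) * f Q = 0 := by linarith
      have h4 : 1 - 4*q ≠ 0 := by nlinarith
      exact (mul_eq_zero.1 this).resolve_left h4
  have hQ0' : f (-Q) = 0 := by
    rcases lt_or_ge q (1/3) with h3 | h3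
    · apply hsmall
      rw [abs_of_neg (by linarith : -Q < 0)]
      rw [show -(-Q) = Q by ring, hQdef, div_lt_iff₀ h1q]
      nlinarith
    · have h := hrelL (-Q) (by linarith)
      rw [show q * (-Q) - q = -Q by linarith [hQq]] at h
      have : (1 - 4*q) * f (-Q) = 0 := by linarith
      have h4 : 1 - 4*q ≠ 0 := by nlinarith
      exact (mul_eq_zero.1 this).resolve_left h4
  have hge : ∀ z : ℝ, Q ≤ z → f z = 0 := by
    intro z hz
    rcases eq_or_lt_of_le hz with h | h
    · rw [← h]; exact hQ0
    · apply hzero; rw [abs_of_pos (by linarith)]; exact h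
  have hle : ∀ z : ℝ, z ≤ -Q → f z = 0 := by
    intro z hz
    rcases eq_or_lt_of_le hz with h | h
    · rw [h]; exact hQ0'
    · apply hzero; rw [abs_of_neg (by linarith)]; linarith
  have halpha : f (1 - Q) = 0 := by
    have h := heq4 (1 - Q)
    have e1 : f (1 - Q - 1) = 0 := by rw [show (1:ℝ) - Q - 1 = -Q by ring]; exact hQ0'
    have e2 : f (1 - Q + 1) = 0 := hge _ (by linarith)
    have e3 : f (q * (1 - Q)) = 0 := by
      apply hsmall
      rw [abs_of_pos (by nlinarith : (0:ℝ) < q * (1 - Q))]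
      nlinarith
    rw [e1, e2, e3] at h
    linarith
  have halpha' : f (Q - 1) = 0 := by
    have h := heq4 (Q - 1)
    have e1 : f (Q - 1 - 1) = 0 := hle _ (by linarith)
    have e2 : f (Q - 1 + 1) = f Q := by ring_nf
    have e3 : f (q * (Q - 1)) = 0 := by
      apply hsmall
      rw [abs_of_neg (by nlinarith : q * (Q - 1) < 0)]
      nlinarith
    rw [e1, e2, e3, hQ0] at h
    linarith
  have hqQ1 : f (Q - q) = 0 := by
    have h := heq4 Q
    have e1 : f (Q - 1) = 0 := halpha'
    have e2 : f (Q + 1) = 0 := hge _ (by linarith)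
    have e3 : q * Q = Q - q := by linarith [hQq]
    rw [e1, e2, e3, hQ0] at h
    have h0 : (4*q) * f (Q - q) = 0 := by linarith
    rcases mul_eq_zero.1 h0 with h' | h'
    · exact absurd h' (ne_of_gt h4q)
    · exact h'
  have hqQ2 : f (q - Q) = 0 := by
    have h := heq4 (-Q)
    have e1 : f (-Q - 1) = 0 := hle _ (by linarith)
    have e2 : f (-Q + 1) = 0 := by rw [show -Q + 1 = 1 - Q by ring]; exact halpha
    have e3 : q * -Q = q - Q := by linarith [hQq]
    rw [e1, e2, e3, hQ0'] at h
    have h0 : (4*q) * f (q - Q) = 0 := by linarith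
    rcases mul_eq_zero.1 h0 with h' | h'
    · exact absurd h' (ne_of_gt h4q)
    · exact h'
  -- scaling relations in t coordinates
  have hR : ∀ t : ℝ, 0 ≤ t → t ≤ 1 → f (Q - t) = 4 * q * f (Q - q * t) := by
    intro t ht0 ht1
    rcases eq_or_lt_of_le ht1 with h | h
    · rw [h, mul_one, halpha', hqQ1]
      ring
    · have hh := hrelR (Q - t) (by linarith)
      rw [show q * (Q - t) + q = Q - q * t by linear_combination hQq] at hh
      exact hh
  have hL : ∀ t : ℝ, 0 ≤ t → t ≤ 1 → f (t - Q) = 4 * q * f (q * t - Q) := by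
    intro t ht0 ht1
    rcases eq_or_lt_of_le ht1 with h | h
    · rw [h, mul_one, halpha, hqQ2]
      ring
    · have hh := hrelL (t - Q) (by linarith)
      rw [show q * (t - Q) - q = q * t - Q by linear_combination (-1)*hQq] at hh
      exact hh
  -- zones
  have hZ : ∀ n : ℕ, ∀ t : ℝ, q^n * (2*Q - 1) ≤ t → t ≤ q^n → f (Q - t) = 0 ∧ f (t - Q) = 0 := by
    intro n
    induction n with
    | zero =>
      intro t h1 h2
      rw [pow_zero, one_mul] at h1
      rcases lt_trichotomy t 0 with ht | ht | ht
      · constructor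
        · exact hge _ (by linarith)
        · exact hle _ (by linarith)
      · rw [ht]
        constructor
        · simpa using hQ0
        · simpa using hQ0'
      · rw [pow_zero] at h2
        rcases eq_or_lt_of_le h1 with hb | hb
        · constructor
          · rw [← hb, show Q - (2*Q-1) = 1 - Q by ring]; exact halpha
          · rw [← hb, show (2*Q-1) - Q = Q - 1 by ring]; exact halpha'
        · rcases eq_or_lt_of_le h2 with h1' | h1'
          · rw [h1']
            constructor
            · exact halpha'
            · exact halpha
          · constructor
            · apply hsmall
              have : |Q - t| < 1 - Q := abs_lt.2 ⟨by linarith, by linarith⟩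
              exact this
            · apply hsmall
              have : |t - Q| < 1 - Q := abs_lt.2 ⟨by linarith, by linarith⟩
              exact this
    | succ m ih =>
      intro t h1 h2
      rcases lt_trichotomy t 0 with ht | ht | ht
      · constructor
        · exact hge _ (by linarith)
        · exact hle _ (by linarith)
      · rw [ht]
        constructor
        · simpa using hQ0
        · simpa using hQ0'
      · have hqm : (0:ℝ) < q^(m+1) := by positivity
        have ht1 : t / q ≤ q ^ m := by
          rw [div_le_iff₀ hq]
          calc t ≤ q^(m+1) := h2
            _ = q^m * q := by ring
        have ht0 : q^m * (2*Q-1) ≤ t / q := by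
          rw [le_div_iff₀ hq]
          calc q^m * (2*Q-1) * q = q^(m+1) * (2*Q-1) := by ring
            _ ≤ t := h1
        have htq : 0 ≤ t / q := by positivity
        have htle : t / q ≤ 1 := le_trans ht1 (pow_le_one₀ hq.le hq1'.le)
        obtain ⟨ihF, ihG⟩ := ih (t/q) ht0 ht1
        constructor
        · have := hR (t/q) htq htle
          rw [show q * (t/q) = t by field_simp] at this
          rw [ihF] at this
          have h0 : (4*q) * f (Q - t) = 0 := by linarith
          rcases mul_eq_zero.1 h0 with h' | h'
          · exact absurd h' (ne_of_gt h4q)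
          · exact h'
        · have := hL (t/q) htq htle
          rw [show q * (t/q) = t by field_simp] at this
          rw [ihG] at this
          have h0 : (4*q) * f (t - Q) = 0 := by linarith
          rcases mul_eq_zero.1 h0 with h' | h'
          · exact absurd h' (ne_of_gt h4q)
          · exact h'
  -- key inequality: 2Q < 1 + q + q^2
  have h2Q : 2*Q < 1 + q + q^2 := by
    rw [hQdef, show 2*(q/(1-q)) = (2*q)/(1-q) by ring, div_lt_iff₀ h1q]
    nlinarith [hqcube]
  have h2qQ : 2*q*Q < 1 := by nlinarith [hQ1, hq2, hQpos, hq]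
  -- reflection relations
  have hC1 : ∀ t : ℝ, q ≤ t → t ≤ 2*Q-1 → f (Q - t) = -(1/2) * f (Q - t - 1) := by
    intro t ht1 ht2
    have h := heq4 (Q - t)
    have e1 : q * (Q - t) = Q - (q + q * t) := by linear_combination hQq
    have e2 : f (Q - (q + q*t)) = 0 := by
      refine (hZ 0 (q + q*t) ?_ ?_).1
      · rw [pow_zero, one_mul]
        nlinarith [h2Q, hq]
      · rw [pow_zero]
        nlinarith [h2qQ, hq]
    have e3 : f (Q - t + 1) = 0 := hge _ (by linarith [hQ1])
    rw [e1, e2, e3] at h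
    linarith
  have hC2 : ∀ t : ℝ, q ≤ t → t ≤ 2*Q-1 → f (t - Q) = -(1/2) * f (t - Q + 1) := by
    intro t ht1 ht2
    have h := heq4 (t - Q)
    have e1 : q * (t - Q) = (q + q * t) - Q := by linear_combination (-1)*hQq
    have e2 : f ((q + q*t) - Q) = 0 := by
      refine (hZ 0 (q + q*t) ?_ ?_).2
      · rw [pow_zero, one_mul]
        nlinarith [h2Q, hq]
      · rw [pow_zero]
        nlinarith [h2qQ, hq]
    have e3 : f (t - Q - 1) = 0 := hle _ (by linarith [hQ1])
    rw [e1, e2, e3] at h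
    linarith
  -- shift relations
  have hS1 : ∀ w : ℝ, 0 ≤ w → w ≤ 2*Q-1-q → f (w - Q) = (8*q/3) * f ((q + q*w) - Q) := by
    intro w hw0 hw1
    have h := heq4 (w - Q)
    have e1 : q * (w - Q) = (q + q * w) - Q := by linear_combination (-1)*hQq
    have e2 : f (w - Q - 1) = 0 := hle _ (by linarith [hQ1])
    have e3 : f (w - Q + 1) = -(1/2) * f (w - Q) := by
      have hc := hC1 (2*Q-1-w) (by linarith) (by linarith)
      rw [show Q - (2*Q-1-w) = w - Q + 1 by ring] at hc
      rw [show w - Q + 1 - 1 = w - Q by ring] at hc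
      exact hc
    rw [e1, e2, e3] at h
    linarith
  have hS2 : ∀ w : ℝ, 0 ≤ w → w ≤ 2*Q-1-q → f (Q - w) = (8*q/3) * f (Q - (q + q*w)) := by
    intro w hw0 hw1
    have h := heq4 (Q - w)
    have e1 : q * (Q - w) = Q - (q + q * w) := by linear_combination hQq
    have e2 : f (Q - w + 1) = 0 := hge _ (by linarith)
    have e3 : f (Q - w - 1) = -(1/2) * f (Q - w) := by
      have hc := hC2 (2*Q-1-w) (by linarith) (by linarith)
      rw [show (2*Q-1-w) - Q = Q - w - 1 by ring] at hc
      rw [show Q - w - 1 + 1 = Q - w by ring] at hc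
      exact hc
    rw [e1, e2, e3] at h
    linarith
  -- iterated scaling
  have hRn : ∀ n : ℕ, ∀ t : ℝ, 0 ≤ t → t ≤ 1 →
      f (Q - t) = (4*q)^n * f (Q - q^n * t) ∧ f (t - Q) = (4*q)^n * f (q^n * t - Q) := by
    intro n
    induction n with
    | zero => intro t _ _; constructor <;> simp
    | succ m ih =>
      intro t ht0 ht1
      have hb : q^m * t ≤ 1 := by
        calc q^m * t ≤ 1 * 1 := by
              apply mul_le_mul (pow_le_one₀ hq.le hq1'.le) ht1 ht0 zero_le_one
          _ = 1 := by ring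
      have hb0 : 0 ≤ q^m * t := by positivity
      obtain ⟨ih1, ih2⟩ := ih t ht0 ht1
      constructor
      · rw [ih1, hR (q^m * t) hb0 hb, show q * (q^m * t) = q^(m+1)*t by ring]
        ring
      · rw [ih2, hL (q^m * t) hb0 hb, show q * (q^m * t) = q^(m+1)*t by ring]
        ring
  -- core: all gap points die
  have hCore : ∀ s : ℝ, 0 < s → s < 2*Q-1-q → f (Q - s) = 0 ∧ f (s - Q) = 0 := by
    intro s hs0 hsL
    have hL0 : 0 < 2*Q-1-q := lt_trans hs0 hsL
    have hLq : 2*Q-1-q < q := by nlinarith [hQq, hq2, h1q]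
    have hs1 : s < 1 := by linarith
    -- Case A machinery
    have caseA : ∀ j : ℕ, q^j*(2*Q-1) < 2*Q-1-q → 2*Q-1-q ≤ q^j →
        f (Q - s) = 0 ∧ f (s - Q) = 0 := by
      intro j hj1 hj2
      obtain ⟨r, hr⟩ := exists_pow_lt_of_lt_one (sub_pos.2 hj1) hq1'
      have hpr : (0:ℝ) < q^(r+1) := pow_pos hq _
      have hkey : q^(r+1)*s < (2*Q-1-q) - q^j*(2*Q-1) := by
        have h1 : q^(r+1)*s < q^(r+1) := by
          calc q^(r+1)*s < q^(r+1)*1 := by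
                exact mul_lt_mul_of_pos_left hs1 hpr
            _ = q^(r+1) := by ring
        have h2 : q^(r+1) ≤ q^r := by
          calc q^(r+1) = q^r * q := by ring
            _ ≤ q^r * 1 := by
                apply mul_le_mul_of_nonneg_left hq1'.le (by positivity)
            _ = q^r := by ring
        linarith
      have hw0 : (0:ℝ) ≤ q^r * s := by positivity
      have hwL : q^r * s ≤ 2*Q-1-q := by
        have : q^r * s ≤ 1 * s := by
          apply mul_le_mul_of_nonneg_right (pow_le_one₀ hq.le hq1'.le) hs0.le
        linarith
      have hqw0 : (0:ℝ) ≤ q*(q^r*s) := by positivity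
      have htau1 : q ≤ q + q*(q^r*s) := by linarith
      have htau2 : q + q*(q^r*s) ≤ 2*Q-1 := by
        have h1 : q*(q^r*s) ≤ q^r*s := mul_le_of_le_one_left hw0 hq1'.le
        linarith
      have hzlow : q^j*(2*Q-1) ≤ (2*Q-1-q) - q^(r+1)*s := by linarith
      have hzhigh : (2*Q-1-q) - q^(r+1)*s ≤ q^j := by
        have h1 : (0:ℝ) ≤ q^(r+1)*s := by positivity
        linarith
      constructor
      · have e1 := (hRn r s hs0.le hs1.le).1
        have e2 := hS2 (q^r*s) hw0 hwL
        have e3 := hC1 (q + q*(q^r*s)) htau1 htau2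
        have e4 : Q - (q + q*(q^r*s)) - 1 = ((2*Q-1-q) - q^(r+1)*s) - Q := by ring
        have e5 := (hZ j ((2*Q-1-q) - q^(r+1)*s) hzlow hzhigh).2
        rw [e4, e5, mul_zero] at e3
        rw [e3, mul_zero] at e2
        rw [e2, mul_zero] at e1
        exact e1
      · have e1 := (hRn r s hs0.le hs1.le).2
        have e2 := hS1 (q^r*s) hw0 hwL
        have e3 := hC2 (q + q*(q^r*s)) htau1 htau2
        have e4 : q + q*(q^r*s) - Q + 1 = Q - ((2*Q-1-q) - q^(r+1)*s) := by ring
        have e5 := (hZ j ((2*Q-1-q) - q^(r+1)*s) hzlow hzhigh).1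
        rw [e4, e5, mul_zero] at e3
        rw [e3, mul_zero] at e2
        rw [e2, mul_zero] at e1
        exact e1
    -- Case B machinery
    have caseB : ∀ j : ℕ, q^(j+1) < 2*Q-1-q → 2*Q-1-q ≤ q^j*(2*Q-1) → 2*Q-1 ≤ 1-q →
        f (Q - s) = 0 ∧ f (s - Q) = 0 := by
      intro j hj1 hj2 hbeta
      have h12 : (0:ℝ) < 1-2*q := by linarith
      have hqj : (0:ℝ) < q^j := pow_pos hq _
      obtain ⟨r, hr⟩ := exists_pow_lt_of_lt_one
        (show (0:ℝ) < min (2*Q-1-q) (q^j*(1-2*q)) from lt_min hL0 (by positivity)) hq1'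
      have hrA : q^r < 2*Q-1-q := lt_of_lt_of_le hr (min_le_left _ _)
      have hrB : q^r < q^j*(1-2*q) := lt_of_lt_of_le hr (min_le_right _ _)
      have hpr : (0:ℝ) < q^(r+1) := pow_pos hq _
      have hpr2 : (0:ℝ) < q^(r+2) := pow_pos hq _
      have hdown1 : q^(r+1) ≤ q^r := by
        calc q^(r+1) = q^r * q := by ring
          _ ≤ q^r * 1 := mul_le_mul_of_nonneg_left hq1'.le (by positivity)
          _ = q^r := by ring
      have hdown2 : q^(r+2) ≤ q^r := by
        calc q^(r+2) = q^r * q^2 := by ring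
          _ ≤ q^r * 1 := mul_le_mul_of_nonneg_left (pow_le_one₀ hq.le hq1'.le) (by positivity)
          _ = q^r := by ring
      have hss1 : q^(r+1)*s < q^(r+1) := by
        calc q^(r+1)*s < q^(r+1)*1 := mul_lt_mul_of_pos_left hs1 hpr
          _ = q^(r+1) := by ring
      have hss2 : q^(r+2)*s < q^(r+2) := by
        calc q^(r+2)*s < q^(r+2)*1 := mul_lt_mul_of_pos_left hs1 hpr2
          _ = q^(r+2) := by ring
      -- the intermediate point y
      set y : ℝ := (2*Q-1-q) - q^(r+1)*s with hydef
      have hy0 : 0 < y := by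
        rw [hydef]; linarith
      have hyL : y ≤ 2*Q-1-q := by
        have h1 : (0:ℝ) ≤ q^(r+1)*s := by positivity
        rw [hydef]; linarith
      have hw0 : (0:ℝ) ≤ q^r * s := by positivity
      have hwL : q^r * s ≤ 2*Q-1-q := by
        have : q^r * s ≤ 1 * s := mul_le_mul_of_nonneg_right (pow_le_one₀ hq.le hq1'.le) hs0.le
        linarith
      have hqw0 : (0:ℝ) ≤ q*(q^r*s) := by positivity
      have htau1 : q ≤ q + q*(q^r*s) := by linarith
      have htau2 : q + q*(q^r*s) ≤ 2*Q-1 := by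
        have h1 : q*(q^r*s) ≤ q^r*s := mul_le_of_le_one_left hw0 hq1'.le
        linarith
      have hqy0 : (0:ℝ) ≤ q*y := by positivity
      have htau1' : q ≤ q + q*y := by linarith
      have htau2' : q + q*y ≤ 2*Q-1 := by
        have h1 : q*y ≤ y := mul_le_of_le_one_left hy0.le hq1'.le
        linarith
      -- the final zone point
      have hid : (2*Q-1)*(1-q) = 3*q-1 := by linear_combination (-2)*hQq
      have hzlow : q^(j+1)*(2*Q-1) ≤ (2*Q-1-q)*(1-q) + q^(r+2)*s := by
        have h1 : q^(j+1)*(2*Q-1) ≤ q^(j+1)*(1-q) := by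
          apply mul_le_mul_of_nonneg_left hbeta (by positivity)
        have h2 : q^(j+1)*(1-q) ≤ (2*Q-1-q)*(1-q) := by
          apply mul_le_mul_of_nonneg_right hj1.le h1q.le
        have h3 : (0:ℝ) ≤ q^(r+2)*s := by positivity
        linarith
      have hzhigh : (2*Q-1-q)*(1-q) + q^(r+2)*s ≤ q^(j+1) := by
        have h1 : (2*Q-1-q)*(1-q) ≤ q^j*(2*Q-1)*(1-q) := by
          apply mul_le_mul_of_nonneg_right hj2 h1q.le
        have h2 : q^j*(2*Q-1)*(1-q) = q^j*(3*q-1) := by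
          rw [show q^j*(2*Q-1)*(1-q) = q^j*((2*Q-1)*(1-q)) by ring, hid]
        have h3 : q^(r+2)*s < q^j*(1-2*q) := by
          calc q^(r+2)*s < q^(r+2) := hss2
            _ ≤ q^r := hdown2
            _ < q^j*(1-2*q) := hrB
        have h4 : q^j*(3*q-1) + q^j*(1-2*q) = q^(j+1) := by ring
        linarith
      constructor
      · -- f (Q - s) = 0
        have e1 := (hRn r s hs0.le hs1.le).1
        have e2 := hS2 (q^r*s) hw0 hwL
        have e3 := hC1 (q + q*(q^r*s)) htau1 htau2
        have e4 : Q - (q + q*(q^r*s)) - 1 = y - Q := by rw [hydef]; ring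
        -- now kill f (y - Q) via hS1, hC2, hZ (j+1)
        have e5 := hS1 y hy0.le hyL
        have e6 := hC2 (q + q*y) htau1' htau2'
        have e7 : q + q*y - Q + 1 = Q - ((2*Q-1-q)*(1-q) + q^(r+2)*s) := by
          rw [hydef]; ring
        have e8 := (hZ (j+1) ((2*Q-1-q)*(1-q) + q^(r+2)*s) hzlow hzhigh).1
        rw [e7, e8, mul_zero] at e6
        rw [e6, mul_zero] at e5
        rw [e4, e5, mul_zero] at e3
        rw [e3, mul_zero] at e2
        rw [e2, mul_zero] at e1
        exact e1
      · -- f (s - Q) = 0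
        have e1 := (hRn r s hs0.le hs1.le).2
        have e2 := hS1 (q^r*s) hw0 hwL
        have e3 := hC2 (q + q*(q^r*s)) htau1 htau2
        have e4 : q + q*(q^r*s) - Q + 1 = Q - y := by rw [hydef]; ring
        have e5 := hS2 y hy0.le hyL
        have e6 := hC1 (q + q*y) htau1' htau2'
        have e7 : Q - (q + q*y) - 1 = ((2*Q-1-q)*(1-q) + q^(r+2)*s) - Q := by
          rw [hydef]; ring
        have e8 := (hZ (j+1) ((2*Q-1-q)*(1-q) + q^(r+2)*s) hzlow hzhigh).2
        rw [e7, e8, mul_zero] at e6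
        rw [e6, mul_zero] at e5
        rw [e4, e5, mul_zero] at e3
        rw [e3, mul_zero] at e2
        rw [e2, mul_zero] at e1
        exact e1
    -- dichotomy
    rcases le_or_gt (3*q^2+q-1) 0 with hH | hH
    · -- lower range : find the level of L
      obtain ⟨j, hj1, hj2⟩ := schilling_mant q hq hq1' (2*Q-1-q) hL0 (by linarith)
      rcases lt_or_ge (q^j*(2*Q-1)) (2*Q-1-q) with hA | hB
      · exact caseA j hA hj2
      · have hq716 : q < 7/16 := by nlinarith [hH, hq]
        have hquad : 0 < q^2 - 5*q + 2 := by nlinarith [hH, hq716, hq]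
        have hid2 : (2*Q-1-(1-q))*(1-q) = -(q^2-5*q+2) := by linear_combination (-2)*hQq
        have hbeta : 2*Q-1 ≤ 1-q := by
          by_contra hcon
          push_neg at hcon
          nlinarith [mul_pos (sub_pos.2 hcon) h1q, hid2, hquad]
        exact caseB j hj1 hB hbeta
    · -- upper range : j = 2 works for case A
      have hidA : (2*Q-1-q) - q^2*(2*Q-1) = 3*q^2+q-1 := by
        linear_combination (-2-2*q)*hQq
      have hA1 : q^2*(2*Q-1) < 2*Q-1-q := by linarith
      have hA2 : 2*Q-1-q ≤ q^2 := by
        have hid3 : (q^2 - (2*Q-1-q))*(1-q) = -(q^3+2*q-1) := by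
          linear_combination 2*hQq
        by_contra hcon
        push_neg at hcon
        nlinarith [mul_pos (sub_pos.2 hcon) h1q, hid3, hqcube]
      exact caseA 2 hA1 hA2
  -- all points in (0,1] die
  have hWin : ∀ t : ℝ, 0 < t → t ≤ 1 → f (Q - t) = 0 ∧ f (t - Q) = 0 := by
    intro t ht0 ht1
    obtain ⟨k, hk1, hk2⟩ := schilling_mant q hq hq1' t ht0 ht1
    rcases le_or_gt (q^k*(2*Q-1)) t with hzone | hwin
    · exact hZ k t hzone hk2
    · have hqk : (0:ℝ) < q^k := pow_pos hq k
      set m : ℝ := t / q^k with hmdef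
      have hm1 : q < m := by
        rw [hmdef, lt_div_iff₀ hqk]
        calc q * q^k = q^(k+1) := by ring
          _ < t := hk1
      have hm2 : m < 2*Q-1 := by
        rw [hmdef, div_lt_iff₀ hqk]
        calc t < q^k*(2*Q-1) := hwin
          _ = (2*Q-1) * q^k := by ring
      have hm0 : 0 < m := lt_trans hq hm1
      have hmle1 : m ≤ 1 := by
        have hQ1' : 2*Q-1 < 1 := by linarith
        linarith
      have hqkm : q^k * m = t := by
        rw [hmdef]; field_simp
      -- core point
      have hcore := hCore (2*Q-1-m) (by linarith) (by linarith)
      constructor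
      · have hc := hC1 m hm1.le hm2.le
        rw [show Q - m - 1 = (2*Q-1-m) - Q by ring, hcore.2, mul_zero] at hc
        have hrn := (hRn k m hm0.le hmle1).1
        rw [hqkm, hc] at hrn
        have h0 : (4*q)^k * f (Q - t) = 0 := hrn.symm
        rcases mul_eq_zero.1 h0 with h' | h'
        · exact absurd h' (ne_of_gt (pow_pos h4q k))
        · exact h'
      · have hc := hC2 m hm1.le hm2.le
        rw [show m - Q + 1 = Q - (2*Q-1-m) by ring, hcore.1, mul_zero] at hc
        have hrn := (hRn k m hm0.le hmle1).2
        rw [hqkm, hc] at hrn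
        have h0 : (4*q)^k * f (t - Q) = 0 := hrn.symm
        rcases mul_eq_zero.1 h0 with h' | h'
        · exact absurd h' (ne_of_gt (pow_pos h4q k))
        · exact h'
  -- final assembly
  intro x
  rcases le_or_gt x (-Q) with hx | hx
  · exact hle x hx
  rcases le_or_gt Q x with hx2 | hx2
  · exact hge x hx2
  rcases lt_or_ge x (1 - Q) with hx3 | hx3
  · -- use G at t = x + Q
    have ht0 : 0 < x + Q := by linarith
    have ht1 : x + Q ≤ 1 := by linarith
    have := (hWin (x + Q) ht0 ht1).2
    rw [show x + Q - Q = x by ring] at this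
    exact this
  · -- use F at t = Q - x
    have ht0 : 0 < Q - x := by linarith
    have ht1 : Q - x ≤ 1 := by linarith [hQ1]
    have := (hWin (Q - x) ht0 ht1).1
    rw [show Q - (Q - x) = x by ring] at this
    exact this
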